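/- Let 𝒫 and 𝒬 be probability measures on a measurable space Ω and let g : Ω → [−1, 1] be measurable. Then |E_{x∼𝒫}[g(x)] − E_{x∼𝒬}[g(x)]| ≤ √(e^{D_2(𝒫‖𝒬)} − 1). -/

import Mathlib

open MeasureTheory ProbabilityTheory ENNReal

open Classical in
/-- The Rényi divergence of order `a` between two measures:
`D_a(P‖Q) = (1/(a−1)) · log ∫ (dP/dQ)^a dQ` if `P ≪ Q`, and `∞` otherwise. -/
noncomputable def renyiDiv {Ω : Type*} [MeasurableSpace Ω] (a : ℝ)
    (P Q : Measure Ω) : EReal :=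
  if P ≪ Q then (((a - 1)⁻¹ : ℝ) : EReal) * ENNReal.log (∫⁻ x, P.rnDeriv Q x ^ a ∂Q)
  else ⊤

/-- **Closeness in order-2 Rényi divergence implies closeness of expectations.**
If `𝒫, 𝒬` are probability measures on `Ω` and `g : Ω → [−1,1]` is measurable, then
`|E_{x∼𝒫}[g(x)] − E_{x∼𝒬}[g(x)]| ≤ √(e^{D₂(𝒫‖𝒬)} − 1)`. -/
theorem abs_integral_sub_le_sqrt_exp_renyiDiv_two_sub_one
    {Ω : Type*} [MeasurableSpace Ω] (P Q : Measure Ω)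
    [IsProbabilityMeasure P] [IsProbabilityMeasure Q]
    (g : Ω → ℝ) (hg : Measurable g) (hg1 : ∀ x, g x ∈ Set.Icc (-1 : ℝ) 1) :
    ENNReal.ofReal |∫ x, g x ∂P - ∫ x, g x ∂Q|
      ≤ (EReal.exp (renyiDiv 2 P Q) - 1) ^ ((1 : ℝ) / 2) := by
  by_cases hPQ : P ≪ Q
  swap
  · simp only [renyiDiv, if_neg hPQ, EReal.exp_top]
    rw [ENNReal.top_sub (by simp), ENNReal.top_rpow_of_pos (by norm_num)]
    exact le_top
  set I : ℝ≥0∞ := ∫⁻ x, P.rnDeriv Q x ^ (2 : ℝ) ∂Q with hI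
  have hdiv : renyiDiv 2 P Q = ENNReal.log I := by
    rw [renyiDiv, if_pos hPQ, ← hI]
    norm_num
  rw [hdiv, ENNReal.exp_log]
  by_cases hItop : I = ⊤
  · rw [hItop, ENNReal.top_sub (by simp), ENNReal.top_rpow_of_pos (by norm_num)]
    exact le_top
  -- real-valued Radon-Nikodym derivative
  set f : Ω → ℝ := fun x => (P.rnDeriv Q x).toReal with hf
  have hfm : Measurable f := (Measure.measurable_rnDeriv P Q).ennreal_toReal
  have hIpow : I = ∫⁻ x, P.rnDeriv Q x ^ (2 : ℕ) ∂Q := by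
    rw [hI]
    congr 1 with x
    rw [← ENNReal.rpow_natCast]
    norm_num
  have hint_f : Integrable f Q := Measure.integrable_toReal_rnDeriv
  have hint_f2 : Integrable (fun x => f x ^ 2) Q := by
    have : Integrable (fun x => ((P.rnDeriv Q x ^ (2 : ℕ)) : ℝ≥0∞).toReal) Q :=
      integrable_toReal_of_lintegral_ne_top
        ((Measure.measurable_rnDeriv P Q).pow_const 2).aemeasurable
        (by rw [← hIpow]; exact hItop)
    simpa [ENNReal.toReal_pow] using this
  have hmem : MemLp f 2 Q :=
    (memLp_two_iff_integrable_sq hfm.aestronglyMeasurable).2 hint_f2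
  have hmem1 : MemLp (fun x => f x - 1) 2 Q := hmem.sub (memLp_const 1)
  have hint_sub : Integrable (fun x => f x - 1) Q := hint_f.sub (integrable_const 1)
  have hf_int : ∫ x, f x ∂Q = 1 := by
    rw [hf, Measure.integral_toReal_rnDeriv hPQ]
    simp
  have hf2_int : ∫ x, f x ^ 2 ∂Q = I.toReal := by
    rw [hIpow]
    rw [← integral_toReal ((Measure.measurable_rnDeriv P Q).pow_const 2).aemeasurable
      (Filter.Eventually.mono (Measure.rnDeriv_lt_top P Q) fun x hx => by
        exact ENNReal.pow_lt_top hx)]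
    simp [ENNReal.toReal_pow]
    rfl
  have hsq_int : ∫ x, (f x - 1) ^ 2 ∂Q = I.toReal - 1 := by
    have : ∀ x, (f x - 1) ^ 2 = f x ^ 2 - 2 * f x + 1 := fun x => by ring
    simp_rw [this]
    have key : Integrable (fun x => f x ^ 2 - 2 * f x) Q := hint_f2.sub (hint_f.const_mul 2)
    rw [integral_add key (integrable_const 1),
      integral_sub hint_f2 (hint_f.const_mul 2), integral_const_mul, hf_int, hf2_int]
    simp
    ring
  -- Cauchy–Schwarz via variance
  have habs_mem : MemLp (fun x => |f x - 1|) 2 Q := hmem1.abs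
  have hvar := variance_nonneg (fun x => |f x - 1|) Q
  rw [variance_eq_sub habs_mem] at hvar
  have hsq : (∫ x, |f x - 1| ∂Q) ^ 2 ≤ I.toReal - 1 := by
    have h1 : ∫ x, (fun x => |f x - 1|) x ^ 2 ∂Q = I.toReal - 1 := by
      simp_rw [sq_abs]; exact hsq_int
    simp only [Pi.pow_apply] at hvar
    calc (∫ x, |f x - 1| ∂Q) ^ 2 ≤ ∫ x, |f x - 1| ^ 2 ∂Q := by linarith [hvar, h1]
      _ = I.toReal - 1 := by simp_rw [sq_abs]; exact hsq_int
  have hIge : (0 : ℝ) ≤ I.toReal - 1 :=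
    le_trans (sq_nonneg _) hsq
  -- rewrite the difference of expectations
  have hPint : ∫ x, g x ∂P = ∫ x, f x * g x ∂Q := by
    rw [← integral_rnDeriv_smul hPQ]
    simp [hf, smul_eq_mul]
  have hgbd : ∀ᵐ x ∂Q, ‖g x‖ ≤ 1 := by
    filter_upwards with x
    rw [Real.norm_eq_abs, abs_le]
    exact ⟨(hg1 x).1, (hg1 x).2⟩
  have hint_fg : Integrable (fun x => f x * g x) Q := by
    have := (hint_f.bdd_mul (c := 1) hg.aestronglyMeasurable hgbd :
      Integrable (fun x => g x * f x) Q)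
    simpa [mul_comm] using this
  have hint_g : Integrable g Q := by
    exact Integrable.mono' (integrable_const (1 : ℝ)) hg.aestronglyMeasurable hgbd
  have hdiff : ∫ x, g x ∂P - ∫ x, g x ∂Q = ∫ x, (f x - 1) * g x ∂Q := by
    rw [hPint, ← integral_sub hint_fg hint_g]
    congr 1 with x
    ring
  have hbound : |∫ x, g x ∂P - ∫ x, g x ∂Q| ≤ ∫ x, |f x - 1| ∂Q := by
    rw [hdiff]
    calc |∫ x, (f x - 1) * g x ∂Q| ≤ ∫ x, |(f x - 1) * g x| ∂Q := by
          simpa only [Real.norm_eq_abs] using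
            norm_integral_le_integral_norm (μ := Q) (fun x => (f x - 1) * g x)
      _ ≤ ∫ x, |f x - 1| ∂Q := by
          refine integral_mono_of_nonneg (Filter.Eventually.of_forall fun x => abs_nonneg _)
            hint_sub.abs (Filter.Eventually.of_forall fun x => ?_)
          show |(f x - 1) * g x| ≤ |f x - 1|
          rw [abs_mul]
          calc |f x - 1| * |g x| ≤ |f x - 1| * 1 := by
                refine mul_le_mul_of_nonneg_left ?_ (abs_nonneg _)
                rw [abs_le]; exact ⟨(hg1 x).1, (hg1 x).2⟩
            _ = |f x - 1| := mul_one _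
  have hfinal : |∫ x, g x ∂P - ∫ x, g x ∂Q| ≤ (I.toReal - 1) ^ ((1 : ℝ) / 2) := by
    rw [← Real.sqrt_eq_rpow]
    refine le_trans hbound ?_
    rw [← Real.sqrt_sq (integral_nonneg fun x => abs_nonneg _)]
    exact Real.sqrt_le_sqrt hsq
  calc ENNReal.ofReal |∫ x, g x ∂P - ∫ x, g x ∂Q|
      ≤ ENNReal.ofReal ((I.toReal - 1) ^ ((1 : ℝ) / 2)) := ENNReal.ofReal_le_ofReal hfinal
    _ = ENNReal.ofReal (I.toReal - 1) ^ ((1 : ℝ) / 2) := by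
        rw [← ENNReal.ofReal_rpow_of_nonneg hIge (by norm_num)]
    _ = (I - 1) ^ ((1 : ℝ) / 2) := by
        rw [ENNReal.ofReal_sub _ (by norm_num), ENNReal.ofReal_toReal hItop]
        norm_num
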